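/- Occurrences of the factors 01 and 10 in the Thue-Morse word strictly alternate: between any two consecutive positions where 01 occurs, there is exactly one position where 10 occurs, and vice versa. -/
import Mathlib


open scoped Classical

/-- The Thue-Morse word: parity of the binary digit sum. -/
def tm (n : ℕ) : ℕ := (Nat.digits 2 n).sum % 2

/-- `t[j..j+n-1] = t[i..i+n-1]` : an occurrence at `j` of the factor `t[i..i+n-1]`. -/
def feq (i j n : ℕ) : Prop := ∀ k < n, tm (j + k) = tm (i + k)

/-- `t[j..j+n-1]` is the binary complement of `t[i..i+n-1]`. -/
def feqc (i j n : ℕ) : Prop := ∀ k < n, tm (j + k) = 1 - tm (i + k)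

/-- Positions of occurrences of `x = t[i..i+n-1]` or its complement. -/
def occSet (i n : ℕ) : ℕ → Prop := fun j => feq i j n ∨ feqc i j n

/-- The intertwining sequence of `x = t[i..i+n-1]`: at index `m`, the label of the
`m`-th (in increasing order of position) occurrence of `x` or its complement;
`0` codes `A` (an occurrence of `x`), `1` codes `B` (an occurrence of the complement). -/
noncomputable def itw (i n m : ℕ) : ℕ :=
  if feq i (Nat.nth (occSet i n) m) n then 0 else 1

/-- The intertwining sequence is `(AB)^ω`. -/
def ABpat (i n : ℕ) : Prop := ∀ m, itw i n m = m % 2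

/-- The intertwining sequence is `(BA)^ω`. -/
def BApat (i n : ℕ) : Prop := ∀ m, itw i n m = (m + 1) % 2

/-- The intertwining sequence is `(ABBA)^ω`. -/
def ABBApat (i n : ℕ) : Prop :=
  ∀ m, itw i n m = if m % 4 = 0 ∨ m % 4 = 3 then 0 else 1

/-- The intertwining sequence is `(BAAB)^ω`. -/
def BAABpat (i n : ℕ) : Prop :=
  ∀ m, itw i n m = if m % 4 = 0 ∨ m % 4 = 3 then 1 else 0

/-- The length-`n` factor of the Thue-Morse word starting at position `i`, as a word. -/
def fac (i n : ℕ) : List ℕ := (List.range n).map (fun k => tm (i + k))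

def occ01 (i : ℕ) : Prop := tm i = 0 ∧ tm (i + 1) = 1

def occ10 (i : ℕ) : Prop := tm i = 1 ∧ tm (i + 1) = 0

/-- Occurrences of 01 and 10 in the Thue-Morse word strictly alternate:
between consecutive occurrences of 01 there is exactly one occurrence of 10,
and vice versa. -/
lemma tm01 (n : ℕ) : tm n = 0 ∨ tm n = 1 := Nat.mod_two_eq_zero_or_one _

/-- Between two positions with different values there is a transition matching them. -/
lemma tm_step : ∀ b a, a < b → tm a ≠ tm b →
    ∃ k, a ≤ k ∧ k < b ∧ tm k = tm a ∧ tm (k + 1) = tm b := by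
  intro b
  induction b with
  | zero => intro a h; omega
  | succ b ih =>
    intro a hab hne
    by_cases h : tm b = tm (b + 1)
    · have hne' : tm a ≠ tm b := by rw [h]; exact hne
      have hab' : a < b := by
        rcases Nat.lt_or_ge a b with h1 | h1
        · exact h1
        · exfalso; have : a = b := by omega
          exact hne' (by rw [this])
      obtain ⟨k, h1, h2, h3, h4⟩ := ih a hab' hne'
      exact ⟨k, h1, by omega, h3, by rw [h4, h]⟩
    · have hba : tm b = tm a := by
        have := tm01 a; have := tm01 b; have := tm01 (b+1); omega
      exact ⟨b, by omega, by omega, hba, rfl⟩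

theorem tm_01_10_alternate :
    (∀ i j, i < j → occ01 i → occ01 j → (∀ l, i < l → l < j → ¬ occ01 l) →
      ∃! k, i < k ∧ k < j ∧ occ10 k) ∧
    (∀ i j, i < j → occ10 i → occ10 j → (∀ l, i < l → l < j → ¬ occ10 l) →
      ∃! k, i < k ∧ k < j ∧ occ01 k) := by
  have key01 : ∀ a b, a < b → tm a = 0 → tm b = 1 → ∃ k, a ≤ k ∧ k < b ∧ occ01 k := by
    intro a b h ha hb
    obtain ⟨k, h1, h2, h3, h4⟩ := tm_step b a h (by omega)
    exact ⟨k, h1, h2, by rw [h3, ha], by rw [h4, hb]⟩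
  have key10 : ∀ a b, a < b → tm a = 1 → tm b = 0 → ∃ k, a ≤ k ∧ k < b ∧ occ10 k := by
    intro a b h ha hb
    obtain ⟨k, h1, h2, h3, h4⟩ := tm_step b a h (by omega)
    exact ⟨k, h1, h2, by rw [h3, ha], by rw [h4, hb]⟩
  constructor
  · intro i j hij ⟨hi0, hi1⟩ ⟨hj0, hj1⟩ hno
    have hij1 : i + 1 < j := by
      rcases Nat.lt_or_ge (i+1) j with h | h
      · exact h
      · exfalso; have : j = i + 1 := by omega
        rw [this] at hj0; omega
    obtain ⟨k, h1, h2, hk⟩ := key10 (i+1) j hij1 hi1 hj0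
    refine ⟨k, ⟨by omega, by omega, hk⟩, ?_⟩
    rintro k' ⟨hk'1, hk'2, hk'⟩
    by_contra hne
    rcases Nat.lt_or_ge k' k with h | h
    · have hlt : k' + 1 < k := by
        rcases Nat.lt_or_ge (k'+1) k with h' | h'
        · exact h'
        · exfalso; have : k = k' + 1 := by omega
          rw [this] at hk; exact absurd hk.1 (by rw [hk'.2]; omega)
      obtain ⟨l, l1, l2, hl⟩ := key01 (k'+1) k hlt hk'.2 hk.1
      exact hno l (by omega) (by omega) hl
    · have h : k < k' := by omega
      have hlt : k + 1 < k' := by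
        rcases Nat.lt_or_ge (k+1) k' with h' | h'
        · exact h'
        · exfalso; have : k' = k + 1 := by omega
          rw [this] at hk'; exact absurd hk'.1 (by rw [hk.2]; omega)
      obtain ⟨l, l1, l2, hl⟩ := key01 (k+1) k' hlt hk.2 hk'.1
      exact hno l (by omega) (by omega) hl
  · intro i j hij ⟨hi0, hi1⟩ ⟨hj0, hj1⟩ hno
    have hij1 : i + 1 < j := by
      rcases Nat.lt_or_ge (i+1) j with h | h
      · exact h
      · exfalso; have : j = i + 1 := by omega
        rw [this] at hj0; omega
    obtain ⟨k, h1, h2, hk⟩ := key01 (i+1) j hij1 hi1 hj0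
    refine ⟨k, ⟨by omega, by omega, hk⟩, ?_⟩
    rintro k' ⟨hk'1, hk'2, hk'⟩
    by_contra hne
    rcases Nat.lt_or_ge k' k with h | h
    · have hlt : k' + 1 < k := by
        rcases Nat.lt_or_ge (k'+1) k with h' | h'
        · exact h'
        · exfalso; have : k = k' + 1 := by omega
          rw [this] at hk; exact absurd hk.1 (by rw [hk'.2]; omega)
      obtain ⟨l, l1, l2, hl⟩ := key10 (k'+1) k hlt hk'.2 hk.1
      exact hno l (by omega) (by omega) hl
    · have h : k < k' := by omega
      have hlt : k + 1 < k' := by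
        rcases Nat.lt_or_ge (k+1) k' with h' | h'
        · exact h'
        · exfalso; have : k' = k + 1 := by omega
          rw [this] at hk'; exact absurd hk'.1 (by rw [hk.2]; omega)
      obtain ⟨l, l1, l2, hl⟩ := key10 (k+1) k' hlt hk.2 hk'.1
      exact hno l (by omega) (by omega) hl
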